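/- Let F be a quadratically closed field of characteristic 0. Then there exists a subfield K of F together with a ring embedding K → ℝ such that K admits a unique quadratic extension up to isomorphism. -/

import Mathlib

open Polynomial Module

namespace QuadAux

variable {k : Type v} [Field k] [CharZero k]

theorem not_isSquare_neg_one (h1 : ∀ a : k, IsSquare a → IsSquare (-a) → a = 0) :
    ¬ IsSquare (-1 : k) := fun h =>
  one_ne_zero (h1 1 IsSquare.one (by simpa using h))

theorem natDegree_quad : (X ^ 2 + 1 : k[X]).natDegree = 2 := by
  have h : (X ^ 2 + 1 : k[X]) = X ^ 2 + C 1 := by rw [map_one]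
  rw [h, natDegree_X_pow_add_C]

theorem monic_quad : (X ^ 2 + 1 : k[X]).Monic := by
  have h : (X ^ 2 + 1 : k[X]) = X ^ 2 + C 1 := by rw [map_one]
  rw [h]; exact monic_X_pow_add_C _ two_ne_zero

theorem irreducible_quad (h1 : ∀ a : k, IsSquare a → IsSquare (-a) → a = 0) :
    Irreducible (X ^ 2 + 1 : k[X]) := by
  rw [Polynomial.irreducible_iff_roots_eq_zero_of_degree_le_three (by rw [natDegree_quad])
    (by rw [natDegree_quad]; norm_num)]
  rw [Multiset.eq_zero_iff_forall_notMem]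
  intro a ha
  rw [mem_roots (monic_quad (k := k)).ne_zero, IsRoot] at ha
  simp only [eval_add, eval_pow, eval_X, eval_one] at ha
  exact not_isSquare_neg_one h1 ⟨a, by linear_combination -ha⟩

theorem exists_sq_eq_neg_one (h1 : ∀ a : k, IsSquare a → IsSquare (-a) → a = 0)
    (h2 : ∀ a : k, IsSquare a ∨ IsSquare (-a))
    (L : Type w) [Field L] [Algebra k L] (hrank : finrank k L = 2) :
    ∃ j : L, j ^ 2 = -1 := by
  haveI : FiniteDimensional k L := FiniteDimensional.of_finrank_pos (by omega)
  -- find x outside the image of k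
  have hbt : (⊥ : Subalgebra k L) ≠ ⊤ := by
    intro h
    have := Subalgebra.bot_eq_top_iff_finrank_eq_one.mp h
    omega
  obtain ⟨x, hx⟩ : ∃ x : L, x ∉ (⊥ : Subalgebra k L) := by
    by_contra h
    push_neg at h
    exact hbt (Algebra.eq_top_iff.mpr fun y => h y)
  have hxr : x ∉ (algebraMap k L).range := by
    rwa [Algebra.mem_bot] at hx
  have hint : IsIntegral k x := IsIntegral.of_finite k x
  have hdeg : (minpoly k x).natDegree = 2 :=
    le_antisymm (hrank ▸ minpoly.natDegree_le x) ((minpoly.two_le_natDegree_iff hint).mpr hxr)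
  set b := (minpoly k x).coeff 1 with hb
  set c := (minpoly k x).coeff 0 with hc
  have hc2 : (minpoly k x).coeff 2 = 1 := by
    have := (minpoly.monic hint).coeff_natDegree
    rwa [hdeg] at this
  have E : algebraMap k L c + algebraMap k L b * x + x ^ 2 = 0 := by
    have E0 := minpoly.aeval k x
    rw [Polynomial.aeval_eq_sum_range, hdeg] at E0
    rw [Finset.sum_range_succ, Finset.sum_range_succ, Finset.sum_range_one] at E0
    simp only [pow_zero, pow_one, hc2, one_smul, Algebra.smul_def] at E0
    rw [← E0, map_one]; ring
  set β := algebraMap k L (b / 2) with hβdef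
  have hβ : β + β = algebraMap k L b := by
    rw [← map_add, add_halves]
  set y := x + β with hy
  set d := (b / 2) ^ 2 - c with hd
  have hy2 : y ^ 2 = algebraMap k L d := by
    have hmap : algebraMap k L d = β ^ 2 - algebraMap k L c := by
      rw [hd, map_sub, map_pow]
    rw [hmap, hy]
    linear_combination E + x * hβ
  have hyb : y ∉ (⊥ : Subalgebra k L) := by
    intro h
    apply hx
    have hxy : x = y - β := by rw [hy]; ring
    rw [hxy, hβdef]
    exact Subalgebra.sub_mem _ h (Subalgebra.algebraMap_mem _ (b / 2))
  have hdns : ¬ IsSquare d := by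
    rintro ⟨e, he⟩
    have : (y - algebraMap k L e) * (y + algebraMap k L e) = 0 := by
      have : algebraMap k L d = algebraMap k L e * algebraMap k L e := by rw [he, map_mul]
      linear_combination hy2 + this
    rcases mul_eq_zero.mp this with h | h
    · apply hyb
      rw [sub_eq_zero] at h
      rw [h]
      exact Subalgebra.algebraMap_mem _ e
    · apply hyb
      rw [add_eq_zero_iff_eq_neg] at h
      rw [h, ← map_neg]
      exact Subalgebra.algebraMap_mem _ (-e)
  obtain ⟨e, he⟩ := (h2 d).resolve_left hdns
  have he0 : e ≠ 0 := by
    rintro rfl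
    apply hyb
    have hd0' : d = 0 := by simpa using he.symm
    have hy0 : y = 0 := by
      have h := hy2
      rw [hd0', map_zero, pow_eq_zero_iff two_ne_zero] at h
      exact h
    rw [hy0]
    exact Subalgebra.zero_mem _
  have hd0 : d ≠ 0 := fun h => he0 (mul_self_eq_zero.mp (by rw [← he, h, neg_zero]))
  refine ⟨y * (algebraMap k L e)⁻¹, ?_⟩
  have hme : (algebraMap k L e) ≠ 0 :=
    (map_ne_zero_iff (algebraMap k L) (algebraMap k L).injective).mpr he0
  rw [mul_pow, hy2, ← map_inv₀, ← map_pow, ← map_mul]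
  have hfin : d * e⁻¹ ^ 2 = -1 := by
    have hsq : e ^ 2 = -d := by rw [pow_two, ← he]
    rw [inv_pow, hsq]
    field_simp
  rw [hfin, map_neg, map_one]

theorem equiv_adjoinRoot (h1 : ∀ a : k, IsSquare a → IsSquare (-a) → a = 0)
    (h2 : ∀ a : k, IsSquare a ∨ IsSquare (-a))
    (L : Type w) [Field L] [Algebra k L] (hrank : finrank k L = 2) :
    Nonempty (AdjoinRoot (X ^ 2 + 1 : k[X]) ≃ₐ[k] L) := by
  haveI : Fact (Irreducible (X ^ 2 + 1 : k[X])) := ⟨irreducible_quad h1⟩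
  obtain ⟨j, hj⟩ := exists_sq_eq_neg_one h1 h2 L hrank
  have haev : aeval j (X ^ 2 + 1 : k[X]) = 0 := by
    simp [hj]
  let φ := AdjoinRoot.liftAlgHom (X ^ 2 + 1 : k[X]) (Algebra.ofId k L) j haev
  have hinj : Function.Injective φ := φ.toRingHom.injective
  have hfr : finrank k (AdjoinRoot (X ^ 2 + 1 : k[X])) = 2 := by
    rw [(AdjoinRoot.powerBasis (monic_quad (k := k)).ne_zero).finrank]
    exact natDegree_quad
  haveI : FiniteDimensional k (AdjoinRoot (X ^ 2 + 1 : k[X])) :=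
    FiniteDimensional.of_finrank_pos (by omega)
  haveI : FiniteDimensional k L := FiniteDimensional.of_finrank_pos (by omega)
  have hsurj : Function.Surjective φ := by
    have := (LinearMap.injective_iff_surjective_of_finrank_eq_finrank
      (f := φ.toLinearMap) (by rw [hfr, hrank])).mp hinj
    exact this
  exact ⟨AlgEquiv.ofBijective φ ⟨hinj, hsurj⟩⟩

theorem finrank_adjoinRoot (h1 : ∀ a : k, IsSquare a → IsSquare (-a) → a = 0) :
    finrank k (AdjoinRoot (X ^ 2 + 1 : k[X])) = 2 := by
  rw [(AdjoinRoot.powerBasis (monic_quad (k := k)).ne_zero).finrank]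
  exact natDegree_quad

end QuadAux


namespace SqAux

variable {F : Type u} [Field F]

/-- The additive submonoid of sums of squares of elements of `K`. -/
def sqM (K : Subfield F) : AddSubmonoid F := AddSubmonoid.closure {y | ∃ x ∈ K, y = x ^ 2}

theorem sq_mem_sqM {K : Subfield F} {x : F} (hx : x ∈ K) : x ^ 2 ∈ sqM K :=
  AddSubmonoid.subset_closure ⟨x, hx, rfl⟩

theorem sqM_mono {K K' : Subfield F} (h : K ≤ K') : sqM K ≤ sqM K' :=
  AddSubmonoid.closure_mono (by rintro w ⟨x, hx, rfl⟩; exact ⟨x, h hx, rfl⟩)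

theorem mem_of_mem_sqM {K : Subfield F} {a : F} (h : a ∈ sqM K) : a ∈ K := by
  induction h using AddSubmonoid.closure_induction with
  | mem x hx => obtain ⟨x', hx', rfl⟩ := hx; exact pow_mem hx' 2
  | zero => exact K.zero_mem
  | add a b _ _ iha ihb => exact K.add_mem iha ihb

theorem sqM_mul {K : Subfield F} {a b : F} (ha : a ∈ sqM K) (hb : b ∈ sqM K) :
    a * b ∈ sqM K := by
  induction ha using AddSubmonoid.closure_induction with
  | mem x hx =>
    obtain ⟨x', hx', rfl⟩ := hx
    induction hb using AddSubmonoid.closure_induction with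
    | mem y hy =>
      obtain ⟨y', hy', rfl⟩ := hy
      have h : x' ^ 2 * y' ^ 2 = (x' * y') ^ 2 := by ring
      rw [h]; exact sq_mem_sqM (K.mul_mem hx' hy')
    | zero => rw [mul_zero]; exact zero_mem _
    | add u v _ _ ihu ihv => rw [mul_add]; exact add_mem ihu ihv
  | zero => rw [zero_mul]; exact zero_mem _
  | add u v _ _ ihu ihv => rw [add_mul]; exact add_mem ihu ihv

/-- Adjoining a square root `s` of an element of `K` to `K`. -/
def adjSqrt (K : Subfield F) (s : F) (hs2 : s ^ 2 ∈ K) (hsK : s ∉ K) : Subfield F where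
  carrier := {z | ∃ x ∈ K, ∃ y ∈ K, z = x + y * s}
  zero_mem' := ⟨0, K.zero_mem, 0, K.zero_mem, by ring⟩
  one_mem' := ⟨1, K.one_mem, 0, K.zero_mem, by ring⟩
  add_mem' := by
    rintro a b ⟨x, hx, y, hy, rfl⟩ ⟨u, hu, v, hv, rfl⟩
    exact ⟨x + u, K.add_mem hx hu, y + v, K.add_mem hy hv, by ring⟩
  neg_mem' := by
    rintro a ⟨x, hx, y, hy, rfl⟩
    exact ⟨-x, K.neg_mem hx, -y, K.neg_mem hy, by ring⟩
  mul_mem' := by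
    rintro a b ⟨x, hx, y, hy, rfl⟩ ⟨u, hu, v, hv, rfl⟩
    exact ⟨x * u + y * v * s ^ 2,
      K.add_mem (K.mul_mem hx hu) (K.mul_mem (K.mul_mem hy hv) hs2),
      x * v + y * u, K.add_mem (K.mul_mem hx hv) (K.mul_mem hy hu), by ring⟩
  inv_mem' := by
    rintro z ⟨x, hx, y, hy, rfl⟩
    by_cases hz : x + y * s = 0
    · rw [hz, inv_zero]; exact ⟨0, K.zero_mem, 0, K.zero_mem, by ring⟩
    · have hd : x ^ 2 - y ^ 2 * s ^ 2 ≠ 0 := by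
        intro h
        by_cases hy0 : y = 0
        · subst hy0
          apply hz
          have hx0 : x = 0 := by
            have : x ^ 2 = 0 := by linear_combination h
            exact pow_eq_zero_iff two_ne_zero |>.mp this
          rw [hx0]; ring
        · have hfact : (x / y - s) * (x / y + s) = 0 := by
            field_simp
            linear_combination h
          rcases mul_eq_zero.mp hfact with h' | h'
          · rw [sub_eq_zero] at h'
            exact hsK (h' ▸ K.div_mem hx hy)
          · rw [add_eq_zero_iff_eq_neg] at h'
            apply hsK
            have : s = -(x / y) := by linear_combination h'
            rw [this]
            exact K.neg_mem (K.div_mem hx hy)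
      set D := x ^ 2 - y ^ 2 * s ^ 2 with hD
      refine ⟨x / D, K.div_mem hx (K.sub_mem (pow_mem hx 2) (K.mul_mem (pow_mem hy 2) hs2)),
        -y / D, K.div_mem (K.neg_mem hy) (K.sub_mem (pow_mem hx 2) (K.mul_mem (pow_mem hy 2) hs2)),
        ?_⟩
      have hmul : (x + y * s) * (x / D + -y / D * s) = 1 := by
        field_simp
        ring
      exact (inv_eq_of_mul_eq_one_right hmul)

theorem mem_adjSqrt_self {K : Subfield F} {s : F} (hs2 : s ^ 2 ∈ K) (hsK : s ∉ K) :
    s ∈ adjSqrt K s hs2 hsK :=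
  ⟨0, K.zero_mem, 1, K.one_mem, by ring⟩

theorem le_adjSqrt {K : Subfield F} {s : F} (hs2 : s ^ 2 ∈ K) (hsK : s ∉ K) :
    K ≤ adjSqrt K s hs2 hsK :=
  fun x hx => ⟨x, hx, 0, K.zero_mem, by ring⟩

theorem sqM_adjSqrt {K : Subfield F} {s : F} (hs2 : s ^ 2 ∈ K) (hsK : s ∉ K) {w : F}
    (hw : w ∈ sqM (adjSqrt K s hs2 hsK)) :
    ∃ p ∈ sqM K, ∃ q ∈ sqM K, ∃ r ∈ K, w = p + q * s ^ 2 + r * s := by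
  induction hw using AddSubmonoid.closure_induction with
  | mem z hz =>
    obtain ⟨z', hz', rfl⟩ := hz
    obtain ⟨x, hx, y, hy, rfl⟩ := hz'
    exact ⟨x ^ 2, sq_mem_sqM hx, y ^ 2, sq_mem_sqM hy, x * y + x * y,
      K.add_mem (K.mul_mem hx hy) (K.mul_mem hx hy), by ring⟩
  | zero => exact ⟨0, zero_mem _, 0, zero_mem _, 0, K.zero_mem, by ring⟩
  | add a b _ _ iha ihb =>
    obtain ⟨p, hp, q, hq, r, hr, rfl⟩ := iha
    obtain ⟨p', hp', q', hq', r', hr', rfl⟩ := ihb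
    exact ⟨p + p', add_mem hp hp', q + q', add_mem hq hq', r + r', K.add_mem hr hr', by ring⟩

variable [CharZero F]

theorem neg_mem_sqM_of_not_mem {M : Subfield F} (hFR : (-1 : F) ∉ sqM M)
    (halg : ∀ x ∈ M, IsAlgebraic ℚ x)
    (hmax : ∀ K : Subfield F, (∀ x ∈ K, IsAlgebraic ℚ x) → (-1 : F) ∉ sqM K → M ≤ K → K ≤ M)
    {s : F} (hs2 : s ^ 2 ∈ M) (hsK : s ∉ M) : -(s ^ 2) ∈ sqM M := by
  set K' := adjSqrt M s hs2 hsK with hK'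
  have halg' : ∀ x ∈ K', IsAlgebraic ℚ x := by
    rintro _ ⟨x, hx, y, hy, rfl⟩
    have hsalg : IsAlgebraic ℚ s := IsAlgebraic.of_pow two_pos (halg _ hs2)
    exact isAlgebraic_iff_isIntegral.mpr ((isAlgebraic_iff_isIntegral.mp (halg x hx)).add
      ((isAlgebraic_iff_isIntegral.mp (halg y hy)).mul (isAlgebraic_iff_isIntegral.mp hsalg)))
  have hK'M : ¬ K' ≤ M := fun h => hsK (h (mem_adjSqrt_self hs2 hsK))
  have hne : (-1 : F) ∈ sqM K' := by
    by_contra h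
    exact hK'M (hmax K' halg' h (le_adjSqrt hs2 hsK))
  obtain ⟨p, hp, q, hq, r, hr, hw⟩ := sqM_adjSqrt hs2 hsK hne
  have hr0 : r = 0 := by
    by_contra hr0
    apply hsK
    have hir : r⁻¹ * r = 1 := inv_mul_cancel₀ hr0
    have hseq : s = r⁻¹ * (-1 - p - q * s ^ 2) := by
      linear_combination (-r⁻¹) * hw + (-s) * hir
    rw [hseq]
    exact M.mul_mem (M.inv_mem hr)
      (M.sub_mem (M.sub_mem (M.neg_mem M.one_mem) (mem_of_mem_sqM hp))
        (M.mul_mem (mem_of_mem_sqM hq) hs2))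
  rw [hr0, zero_mul, add_zero] at hw
  have hq0 : q ≠ 0 := by
    rintro rfl
    rw [zero_mul, add_zero] at hw
    exact hFR (hw ▸ hp)
  have hqM : q ∈ M := mem_of_mem_sqM hq
  have h1p : (1 : F) + p ∈ sqM M := by
    have h1 : (1 : F) ^ 2 ∈ sqM M := sq_mem_sqM M.one_mem
    rw [one_pow] at h1
    exact add_mem h1 hp
  have hiq : q⁻¹ * q = 1 := inv_mul_cancel₀ hq0
  have key : -(s ^ 2) = ((1 : F) + p) * (q * (q⁻¹) ^ 2) := by
    linear_combination (q * q⁻¹ ^ 2) * hw + (s ^ 2 * (1 + q * q⁻¹)) * hiq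
  rw [key]
  exact sqM_mul h1p (sqM_mul hq (sq_mem_sqM (M.inv_mem hqM)))

theorem exists_sq_of_mem_sqM (hF : ∀ a : F, IsSquare a) {M : Subfield F}
    (hFR : (-1 : F) ∉ sqM M) (halg : ∀ x ∈ M, IsAlgebraic ℚ x)
    (hmax : ∀ K : Subfield F, (∀ x ∈ K, IsAlgebraic ℚ x) → (-1 : F) ∉ sqM K → M ≤ K → K ≤ M)
    {t : F} (ht : t ∈ sqM M) : ∃ b ∈ M, b ^ 2 = t := by
  obtain ⟨s, hs⟩ := hF t
  have hts : t = s ^ 2 := by rw [hs]; ring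
  have hs2 : s ^ 2 ∈ M := hts ▸ mem_of_mem_sqM ht
  by_cases hsM : s ∈ M
  · exact ⟨s, hsM, hts.symm⟩
  · exfalso
    have hneg := neg_mem_sqM_of_not_mem hFR halg hmax hs2 hsM
    by_cases ht0 : t = 0
    · apply hsM
      have : s = 0 := by
        rw [ht0] at hts
        exact pow_eq_zero_iff two_ne_zero |>.mp hts.symm
      rw [this]; exact M.zero_mem
    · apply hFR
      have hit : t⁻¹ * t = 1 := inv_mul_cancel₀ ht0
      have hkey : (-1 : F) = (-(s ^ 2)) * t * (t⁻¹) ^ 2 := by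
        rw [← hts]
        linear_combination (t⁻¹ * t + 1) * hit
      rw [hkey]
      exact sqM_mul (sqM_mul hneg ht) (sq_mem_sqM (M.inv_mem (mem_of_mem_sqM ht)))

theorem sq_or_neg_sq (hF : ∀ a : F, IsSquare a) {M : Subfield F}
    (hFR : (-1 : F) ∉ sqM M) (halg : ∀ x ∈ M, IsAlgebraic ℚ x)
    (hmax : ∀ K : Subfield F, (∀ x ∈ K, IsAlgebraic ℚ x) → (-1 : F) ∉ sqM K → M ≤ K → K ≤ M)
    {a : F} (ha : a ∈ M) : (∃ b ∈ M, b ^ 2 = a) ∨ (∃ b ∈ M, b ^ 2 = -a) := by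
  obtain ⟨s, hs⟩ := hF a
  have has : a = s ^ 2 := by rw [hs]; ring
  have hs2 : s ^ 2 ∈ M := has ▸ ha
  by_cases hsM : s ∈ M
  · exact Or.inl ⟨s, hsM, has.symm⟩
  · right
    have hneg := neg_mem_sqM_of_not_mem hFR halg hmax hs2 hsM
    rw [← has] at hneg
    exact exists_sq_of_mem_sqM hF hFR halg hmax hneg

/-- The additive submonoid of nonnegative rationals in `F`. -/
def nonnegRatM (F : Type u) [Field F] [CharZero F] : AddSubmonoid F where
  carrier := {x : F | ∃ q : ℚ, 0 ≤ q ∧ x = q}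
  zero_mem' := ⟨0, le_refl 0, by norm_num⟩
  add_mem' := by
    rintro a b ⟨qa, hqa0, rfl⟩ ⟨qb, hqb0, rfl⟩
    exact ⟨qa + qb, by positivity, by norm_cast⟩

/-- Zorn's lemma: a maximal algebraic formally real subfield exists. -/
theorem exists_max (F : Type u) [Field F] [CharZero F] :
    ∃ M : Subfield F, (∀ x ∈ M, IsAlgebraic ℚ x) ∧ (-1 : F) ∉ sqM M ∧
      (∀ K : Subfield F, (∀ x ∈ K, IsAlgebraic ℚ x) → (-1 : F) ∉ sqM K → M ≤ K → K ≤ M) := by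
  set S : Set (Subfield F) := {K | (∀ x ∈ K, IsAlgebraic ℚ x) ∧ (-1 : F) ∉ sqM K} with hS
  have hbase : (Rat.castHom F).fieldRange ∈ S := by
    constructor
    · rintro x hx
      obtain ⟨q, rfl⟩ := RingHom.mem_fieldRange.mp hx
      exact (eq_ratCast (algebraMap ℚ F) q) ▸ isAlgebraic_algebraMap q
    · intro h
      have hle : sqM (Rat.castHom F).fieldRange ≤ nonnegRatM F := by
        apply AddSubmonoid.closure_le.mpr
        rintro w ⟨x, hx, rfl⟩
        obtain ⟨q, rfl⟩ := RingHom.mem_fieldRange.mp hx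
        exact ⟨q ^ 2, sq_nonneg q, by rw [← map_pow]; simp [Rat.coe_castHom]⟩
      obtain ⟨q, hq0, hq⟩ := hle h
      have hcast : (q : F) = ((-1 : ℚ) : F) := by rw [← hq]; push_cast; ring
      have hq1 : q = -1 := Rat.cast_injective hcast
      rw [hq1] at hq0
      norm_num at hq0
  have hchain : ∀ c ⊆ S, IsChain (· ≤ ·) c → ∀ y ∈ c, ∃ ub ∈ S, ∀ z ∈ c, z ≤ ub := by
    intro c hcS hchain y hy
    have hne : c.Nonempty := ⟨y, hy⟩
    have hdir : DirectedOn (· ≤ ·) c := hchain.directedOn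
    refine ⟨sSup c, ⟨?_, ?_⟩, fun z hz => le_sSup hz⟩
    · intro x hx
      rw [Subfield.mem_sSup_of_directedOn hne hdir] at hx
      obtain ⟨K, hKc, hxK⟩ := hx
      exact (hcS hKc).1 x hxK
    · intro h
      haveI : Nonempty c := hne.to_subtype
      have hdir2 : Directed (· ≤ ·) (fun K : c => sqM (K : Subfield F)) := by
        intro a b
        obtain ⟨z, hz, haz, hbz⟩ := hdir a a.2 b b.2
        exact ⟨⟨z, hz⟩, sqM_mono haz, sqM_mono hbz⟩
      have hle : sqM (sSup c) ≤ ⨆ K : c, sqM (K : Subfield F) := by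
        apply AddSubmonoid.closure_le.mpr
        rintro w ⟨x, hx, rfl⟩
        rw [Subfield.mem_sSup_of_directedOn hne hdir] at hx
        obtain ⟨K, hKc, hxK⟩ := hx
        exact (le_iSup (fun K : c => sqM (K : Subfield F)) ⟨K, hKc⟩) (sq_mem_sqM hxK)
      have hmem := hle h
      rw [AddSubmonoid.mem_iSup_of_directed hdir2] at hmem
      obtain ⟨K, hK⟩ := hmem
      exact (hcS K.2).2 hK
  obtain ⟨M, _, hM⟩ := zorn_le_nonempty₀ S hchain _ hbase
  exact ⟨M, hM.1.1, hM.1.2, fun K h1 h2 hMK => hM.2 ⟨h1, h2⟩ hMK⟩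

end SqAux


namespace BoundAux

theorem exists_rat_le_of_isAlgebraic {R : Type v} [Field R] [LinearOrder R] [IsStrictOrderedRing R] {x : R}
    (hx : IsAlgebraic ℚ x) : ∃ q : ℚ, x ≤ q := by
  have hint : IsIntegral ℚ x := hx.isIntegral
  set p := minpoly ℚ x with hp
  have hnpos : 0 < p.natDegree := minpoly.natDegree_pos hint
  set n := p.natDegree with hn
  set Mq : ℚ := ∑ i ∈ Finset.range n, |p.coeff i| with hMq
  have hM0 : 0 ≤ Mq := Finset.sum_nonneg fun i _ => abs_nonneg _
  refine ⟨Mq + 1, ?_⟩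
  by_contra hlt
  push_neg at hlt
  have hx1 : (1 : R) ≤ x := by
    calc (1 : R) = ((1 : ℚ) : R) := by norm_num
    _ ≤ ((Mq + 1 : ℚ) : R) := by exact_mod_cast (by linarith : (1 : ℚ) ≤ Mq + 1)
    _ ≤ x := le_of_lt hlt
  have hx0 : (0 : R) < x := lt_of_lt_of_le zero_lt_one hx1
  have E0 := minpoly.aeval ℚ x
  rw [← hp, Polynomial.aeval_eq_sum_range, ← hn, Finset.sum_range_succ,
    (minpoly.monic hint).coeff_natDegree, one_smul] at E0
  simp only [Rat.smul_def] at E0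
  have hxn : x ^ n = -∑ i ∈ Finset.range n, ((p.coeff i : ℚ) : R) * x ^ i :=
    eq_neg_of_add_eq_zero_right E0
  have hterm : ∀ i ∈ Finset.range n,
      -(((p.coeff i : ℚ) : R) * x ^ i) ≤ ((|p.coeff i| : ℚ) : R) * x ^ (n - 1) := by
    intro i hi
    rw [Finset.mem_range] at hi
    have h1 : (-(p.coeff i) : ℚ) ≤ (|p.coeff i| : ℚ) := neg_le_abs _
    have h1' : ((-(p.coeff i) : ℚ) : R) ≤ ((|p.coeff i| : ℚ) : R) := by exact_mod_cast h1
    have h2 : x ^ i ≤ x ^ (n - 1) := pow_le_pow_right₀ hx1 (by omega)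
    have h3 : (0 : R) ≤ x ^ i := le_of_lt (pow_pos hx0 _)
    have h4 : ((0 : ℚ) : R) ≤ ((|p.coeff i| : ℚ) : R) := by exact_mod_cast abs_nonneg _
    calc -(((p.coeff i : ℚ) : R) * x ^ i) = ((-(p.coeff i) : ℚ) : R) * x ^ i := by push_cast; ring
    _ ≤ ((|p.coeff i| : ℚ) : R) * x ^ (n - 1) :=
        mul_le_mul h1' h2 h3 (by exact_mod_cast abs_nonneg (p.coeff i))
  have hsum : x ^ n ≤ ∑ i ∈ Finset.range n, ((|p.coeff i| : ℚ) : R) * x ^ (n - 1) := by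
    rw [hxn, ← Finset.sum_neg_distrib]
    exact Finset.sum_le_sum hterm
  have hsum2 : ∑ i ∈ Finset.range n, ((|p.coeff i| : ℚ) : R) * x ^ (n - 1)
      = ((Mq : ℚ) : R) * x ^ (n - 1) := by
    rw [← Finset.sum_mul]
    congr 1
    rw [hMq]
    push_cast
    ring
  have hMx : ((Mq : ℚ) : R) < x :=
    lt_of_le_of_lt (by exact_mod_cast (by linarith : Mq ≤ Mq + 1)) hlt
  have hfin : ((Mq : ℚ) : R) * x ^ (n - 1) < x * x ^ (n - 1) :=
    mul_lt_mul_of_pos_right hMx (pow_pos hx0 _)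
  have hxx : x * x ^ (n - 1) = x ^ n := by
    rw [← pow_succ']
    congr 1
    omega
  rw [hsum2] at hsum
  rw [hxx] at hfin
  exact absurd (lt_of_le_of_lt hsum hfin) (lt_irrefl _)

end BoundAux


set_option maxHeartbeats 1000000 in
/-- Let `F` be a quadratically closed field of characteristic `0` (every element
of `F` is a square). Then there exists a subfield `K` of `F` together with a ring embedding
`K → ℝ` such that `K` admits a unique quadratic extension up to isomorphism: there exists a field
extension of `K` of degree `2`, and any two field extensions of `K` of degree `2` are isomorphic
as `K`-algebras. -/
theorem exists_subfield_real_embeddable_with_unique_quadratic_extension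
    (F : Type u) [Field F] [CharZero F] (hF : ∀ a : F, IsSquare a) :
    ∃ (K : Subfield F) (_ : (↥K) →+* ℝ),
      (∃ (L : Type u) (_ : Field L) (_ : Algebra (↥K) L), Module.finrank (↥K) L = 2) ∧
      (∀ (L₁ L₂ : Type u) (_ : Field L₁) (_ : Algebra (↥K) L₁) (_ : Field L₂)
        (_ : Algebra (↥K) L₂), Module.finrank (↥K) L₁ = 2 → Module.finrank (↥K) L₂ = 2 →
        Nonempty (L₁ ≃ₐ[↥K] L₂)) := by
  classical
  obtain ⟨M, halg, hFR, hmax⟩ := SqAux.exists_max F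
  -- every element of `M` is a square or the negative of a square, in subtype form
  have h2' : ∀ a : ↥M, IsSquare a ∨ IsSquare (-a) := by
    intro a
    rcases SqAux.sq_or_neg_sq hF hFR halg hmax a.2 with ⟨b, hbM, hb⟩ | ⟨b, hbM, hb⟩
    · left
      exact ⟨⟨b, hbM⟩, Subtype.ext (by push_cast; linear_combination -hb)⟩
    · right
      exact ⟨⟨b, hbM⟩, Subtype.ext (by push_cast; linear_combination -hb)⟩
  have h1' : ∀ a : ↥M, IsSquare a → IsSquare (-a) → a = 0 := by
    rintro a ⟨b, hb⟩ ⟨c, hc⟩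
    by_contra ha0
    have haF : (a : F) ≠ 0 := fun h => ha0 (Subtype.ext h)
    have hbF : (a : F) = ↑b * ↑b := by exact_mod_cast congrArg Subtype.val hb
    have hcF : -(a : F) = ↑c * ↑c := by
      have h := congrArg Subtype.val hc
      push_cast at h
      linear_combination h
    have hb0 : (b : F) ≠ 0 := fun h => haF (by rw [hbF, h, mul_zero])
    apply hFR
    have hib : (b : F)⁻¹ * (b : F) = 1 := inv_mul_cancel₀ hb0
    have hkey : (-1 : F) = ((c : F) * (b : F)⁻¹) ^ 2 := by
      linear_combination ((b : F)⁻¹ ^ 2) * hbF + ((b : F)⁻¹ ^ 2) * hcF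
        + ((b : F)⁻¹ * (b : F) + 1) * hib
    rw [hkey]
    exact SqAux.sq_mem_sqM (M.mul_mem c.2 (M.inv_mem b.2))
  have hsum : ∀ a b : ↥M, IsSquare a → IsSquare b → IsSquare (a + b) := by
    rintro a b ⟨p, hp⟩ ⟨q, hq⟩
    have hpF : (a : F) = ↑p * ↑p := by exact_mod_cast congrArg Subtype.val hp
    have hqF : (b : F) = ↑q * ↑q := by exact_mod_cast congrArg Subtype.val hq
    have hmem : ((p : F) ^ 2 + (q : F) ^ 2) ∈ SqAux.sqM M :=
      add_mem (SqAux.sq_mem_sqM p.2) (SqAux.sq_mem_sqM q.2)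
    obtain ⟨e, heM, he⟩ := SqAux.exists_sq_of_mem_sqM hF hFR halg hmax hmem
    refine ⟨⟨e, heM⟩, Subtype.ext ?_⟩
    push_cast
    linear_combination hpF + hqF - he
  -- a ring embedding into ℝ
  have hQ : Nonempty (↥M →+* ℝ) := by
    let C : RingCone ↥M :=
      { carrier := {a : ↥M | IsSquare a}
        zero_mem' := ⟨0, (mul_zero 0).symm⟩
        one_mem' := ⟨1, (mul_one 1).symm⟩
        add_mem' := fun ha hb => hsum _ _ ha hb
        mul_mem' := by
          rintro a b ⟨x, hx⟩ ⟨y, hy⟩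
          exact ⟨x * y, by rw [hx, hy]; ring⟩
        eq_zero_of_mem_of_neg_mem' := fun {a} ha hna => h1' a ha hna }
    haveI : HasMemOrNegMem C := ⟨fun a => h2' a⟩
    letI lor : LinearOrder ↥M := LinearOrder.mkOfAddGroupCone C
    haveI lof : IsOrderedRing ↥M := IsOrderedRing.mkOfCone C
    haveI : IsStrictOrderedRing ↥M := IsOrderedRing.toIsStrictOrderedRing ↥M
    have halg' : ∀ x : ↥M, IsAlgebraic ℚ x := by
      intro x
      obtain ⟨p, hp0, hpe⟩ := halg (↑x) x.2
      refine ⟨p, hp0, ?_⟩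
      let f : ↥M →ₐ[ℚ] F :=
        { M.subtype with
          commutes' := fun q =>
            (eq_ratCast (M.subtype.comp (algebraMap ℚ ↥M)) q).trans
              (eq_ratCast (algebraMap ℚ F) q).symm }
      have hinj : Function.Injective (M.subtype) := Subtype.val_injective
      apply hinj
      rw [map_zero]
      have hcomm : M.subtype (Polynomial.aeval x p) = Polynomial.aeval (f x) p :=
        (Polynomial.aeval_algHom_apply f x p).symm
      rw [hcomm]
      exact hpe
    haveI har : Archimedean ↥M := archimedean_iff_rat_le.mpr
      (fun x => BoundAux.exists_rat_le_of_isAlgebraic (halg' x))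
    exact ⟨(LinearOrderedField.inducedOrderRingHom ↥M ℝ).toRingHom⟩
  obtain ⟨ψ⟩ := hQ
  haveI : Fact (Irreducible (X ^ 2 + 1 : (↥M)[X])) := ⟨QuadAux.irreducible_quad h1'⟩
  refine ⟨M, ψ, ⟨AdjoinRoot (X ^ 2 + 1 : (↥M)[X]), inferInstance, inferInstance,
    QuadAux.finrank_adjoinRoot h1'⟩, ?_⟩
  intro L₁ L₂ _ _ _ _ hL₁ hL₂
  obtain ⟨e₁⟩ := QuadAux.equiv_adjoinRoot h1' h2' L₁ hL₁
  obtain ⟨e₂⟩ := QuadAux.equiv_adjoinRoot h1' h2' L₂ hL₂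
  exact ⟨e₁.symm.trans e₂⟩
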